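/- Let X and Y be finite sets, μ a probability measure on X with μ(x) > 0 for all x, ν a probability measure on Y with ν(y) > 0 for all y, and R : X × Y → [0,∞) with Σ_y R(x,y) > 0 for every x and Σ_x R(x,y) > 0 for every y. Let (φ_n)_{n≥0} be the Sinkhorn iterates φ_{n+1} = ((φ_n)⁺)⁻ starting from any φ₀ : Y → ℝ, and let ρ_n = ∇F(φ_n) be the Y-marginal of the coupling π(φ_n). Then the Sinkhorn scheme is a Bregman gradient descent of the relative entropy H_ν(ρ) = H(ρ|ν) with movement limiter F*: for every n ≥ 0, ∇F(φ_n) = ρ_n and φ_{n+1}(y) − φ_n(y) = −ln( ρ_n(y)/ν(y) ); consequently ∇F( φ_n − ln(ρ_n/ν) ) = ρ_{n+1}, i.e. (F*)'(ρ_{n+1}) − (F*)'(ρ_n) = −H'_ν(ρ_n) with (F*)'(ρ_n) = φ_n. -/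

import Mathlib

open scoped BigOperators

/-- The `+`-transform: `φ⁺(x) = ln( Σ_y e^{φ(y)} R(x,y) / μ(x) )`. -/
noncomputable def plusT {X Y : Type*} [Fintype Y] (μ : X → ℝ) (R : X → Y → ℝ)
    (φ : Y → ℝ) (x : X) : ℝ :=
  Real.log ((∑ y, Real.exp (φ y) * R x y) / μ x)

/-- The `−`-transform: `ψ⁻(y) = −ln( Σ_x e^{−ψ(x)} R(x,y) / ν(y) )`. -/
noncomputable def minusT {X Y : Type*} [Fintype X] (ν : Y → ℝ) (R : X → Y → ℝ)
    (ψ : X → ℝ) (y : Y) : ℝ :=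
  -Real.log ((∑ x, Real.exp (-ψ x) * R x y) / ν y)

/-- The coupling `π(φ)(x,y) = e^{φ(y) − φ⁺(x)} R(x,y)`. -/
noncomputable def coupling {X Y : Type*} [Fintype Y] (μ : X → ℝ) (R : X → Y → ℝ)
    (φ : Y → ℝ) (x : X) (y : Y) : ℝ :=
  Real.exp (φ y - plusT μ R φ x) * R x y

/-- The functional `F(φ) = Σ_x μ(x) φ⁺(x)`. -/
noncomputable def Ffun {X Y : Type*} [Fintype X] [Fintype Y] (μ : X → ℝ)
    (R : X → Y → ℝ) (φ : Y → ℝ) : ℝ :=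
  ∑ x, μ x * plusT μ R φ x

lemma sum_exp_mul_pos {Y : Type*} [Fintype Y] (r : Y → ℝ) (g : Y → ℝ)
    (hr : ∀ y, 0 ≤ r y) (hrow : 0 < ∑ y, r y) :
    0 < ∑ y, Real.exp (g y) * r y := by
  obtain ⟨y, hy⟩ : ∃ y, 0 < r y := by
    by_contra hcon
    push_neg at hcon
    have : ∑ y, r y ≤ 0 := Finset.sum_nonpos (fun y _ => hcon y)
    linarith
  exact Finset.sum_pos' (fun y _ => mul_nonneg (Real.exp_pos _).le (hr y))
    ⟨y, Finset.mem_univ y, mul_pos (Real.exp_pos _) hy⟩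

lemma key_hasFDeriv {X Y : Type*} [Fintype X] [Fintype Y]
    (μ : X → ℝ) (R : X → Y → ℝ) (hμpos : ∀ x, 0 < μ x)
    (hR : ∀ x y, 0 ≤ R x y) (hrow : ∀ x, 0 < ∑ y, R x y) (φ : Y → ℝ) :
    HasFDerivAt (Ffun μ R)
      (∑ y, (∑ x, coupling μ R φ x y) • (ContinuousLinearMap.proj y : (Y → ℝ) →L[ℝ] ℝ)) φ := by
  have hSpos : ∀ x : X, 0 < ∑ y, Real.exp (φ y) * R x y :=
    fun x => sum_exp_mul_pos (R x) φ (hR x) (hrow x)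
  have hx : ∀ x : X, HasFDerivAt (fun ψ : Y → ℝ => μ x * plusT μ R ψ x)
      (∑ y, (coupling μ R φ x y) • (ContinuousLinearMap.proj y : (Y → ℝ) →L[ℝ] ℝ)) φ := by
    intro x
    have hS : HasFDerivAt (fun ψ : Y → ℝ => ∑ y, Real.exp (ψ y) * R x y)
        (∑ y, (Real.exp (φ y) * R x y) • (ContinuousLinearMap.proj y : (Y → ℝ) →L[ℝ] ℝ)) φ := by
      apply HasFDerivAt.fun_sum
      intro y _
      have h1 : HasFDerivAt (fun ψ : Y → ℝ => ψ y)
          (ContinuousLinearMap.proj y : (Y → ℝ) →L[ℝ] ℝ) φ :=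
        (ContinuousLinearMap.proj y : (Y → ℝ) →L[ℝ] ℝ).hasFDerivAt
      have h2 := (h1.exp).mul_const (R x y)
      refine h2.congr_fderiv ?_
      rw [smul_smul, mul_comm]
    have hSdiv : HasFDerivAt (fun ψ : Y → ℝ => (∑ y, Real.exp (ψ y) * R x y) / μ x)
        ((μ x)⁻¹ • ∑ y, (Real.exp (φ y) * R x y) • (ContinuousLinearMap.proj y : (Y → ℝ) →L[ℝ] ℝ)) φ := by
      simpa [div_eq_inv_mul] using hS.const_mul (μ x)⁻¹
    have hne : (∑ y, Real.exp (φ y) * R x y) / μ x ≠ 0 :=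
      (div_pos (hSpos x) (hμpos x)).ne'
    have hfin := (hSdiv.log hne).const_mul (μ x)
    have heq : (fun ψ : Y → ℝ => μ x * Real.log ((∑ y, Real.exp (ψ y) * R x y) / μ x))
        = fun ψ : Y → ℝ => μ x * plusT μ R ψ x := by
      funext ψ; rw [plusT]
    rw [heq] at hfin
    refine hfin.congr_fderiv ?_
    rw [smul_smul, smul_smul, Finset.smul_sum]
    apply Finset.sum_congr rfl
    intro y _
    rw [smul_smul]
    congr 1
    have hS' := (hSpos x).ne'
    have hμ' := (hμpos x).ne'
    rw [coupling, Real.exp_sub, plusT,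
      Real.exp_log (div_pos (hSpos x) (hμpos x))]
    field_simp
  have htot := HasFDerivAt.fun_sum (fun x (_ : x ∈ Finset.univ) => hx x)
  have heqF : (fun ψ : Y → ℝ => ∑ x, μ x * plusT μ R ψ x) = Ffun μ R := by
    funext ψ; rw [Ffun]
  rw [heqF] at htot
  refine htot.congr_fderiv ?_
  rw [Finset.sum_comm]
  apply Finset.sum_congr rfl
  intro x _
  rw [Finset.sum_smul]

/-- the Sinkhorn scheme `φ_{n+1} = ((φ_n)⁺)⁻` is a Bregman gradient
descent of `H_ν(ρ) = H(ρ|ν)` with movement limiter `F*`: for every `n`,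
`∇F(φ_n) = ρ_n`, `φ_{n+1} − φ_n = −ln(ρ_n/ν)`, and consequently
`∇F(φ_n − ln(ρ_n/ν)) = ρ_{n+1}`, i.e. `(F*)'(ρ_{n+1}) − (F*)'(ρ n) = −H'_ν(ρ_n)`. -/
theorem sinkhorn_is_bregman_gradient_descent {X Y : Type*} [Fintype X] [Fintype Y]
    (μ : X → ℝ) (ν : Y → ℝ) (R : X → Y → ℝ)
    (hμpos : ∀ x, 0 < μ x) (hμ : ∑ x, μ x = 1)
    (hνpos : ∀ y, 0 < ν y) (hν : ∑ y, ν y = 1)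
    (hR : ∀ x y, 0 ≤ R x y)
    (hrow : ∀ x, 0 < ∑ y, R x y) (hcol : ∀ y, 0 < ∑ x, R x y)
    (φ : ℕ → Y → ℝ)
    (hiter : ∀ n, φ (n + 1) = minusT ν R (plusT μ R (φ n)))
    (ρ : ℕ → Y → ℝ) (hρ : ∀ n y, ρ n y = ∑ x, coupling μ R (φ n) x y) :
    (∀ (n : ℕ) (h : Y → ℝ),
        fderiv ℝ (Ffun μ R) (φ n) h = ∑ y, ρ n y * h y) ∧
    (∀ (n : ℕ) (y : Y),
        φ (n + 1) y - φ n y = -Real.log (ρ n y / ν y)) ∧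
    (∀ (n : ℕ) (h : Y → ℝ),
        fderiv ℝ (Ffun μ R) (fun y => φ n y - Real.log (ρ n y / ν y)) h =
          ∑ y, ρ (n + 1) y * h y) := by
  have part1 : ∀ (ψ : Y → ℝ) (h : Y → ℝ),
      fderiv ℝ (Ffun μ R) ψ h = ∑ y, (∑ x, coupling μ R ψ x y) * h y := by
    intro ψ h
    rw [(key_hasFDeriv μ R hμpos hR hrow ψ).fderiv]
    simp [ContinuousLinearMap.sum_apply]
  have part2 : ∀ (n : ℕ) (y : Y),
      φ (n + 1) y - φ n y = -Real.log (ρ n y / ν y) := by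
    intro n y
    have hT : 0 < ∑ x, Real.exp (-(plusT μ R (φ n) x)) * R x y :=
      sum_exp_mul_pos (fun x => R x y) _ (fun x => hR x y) (hcol y)
    have hρeq : ρ n y = Real.exp (φ n y) * ∑ x, Real.exp (-(plusT μ R (φ n) x)) * R x y := by
      rw [hρ, Finset.mul_sum]
      apply Finset.sum_congr rfl
      intro x _
      rw [coupling, Real.exp_sub, Real.exp_neg, div_eq_mul_inv]
      ring
    rw [hiter n, minusT, hρeq, mul_div_assoc,
      Real.log_mul (Real.exp_ne_zero _) (div_pos hT (hνpos y)).ne', Real.log_exp]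
    ring
  refine ⟨fun n h => by rw [part1]; exact Finset.sum_congr rfl fun y _ => by rw [hρ],
    part2, fun n h => ?_⟩
  have hfeq : (fun y => φ n y - Real.log (ρ n y / ν y)) = φ (n + 1) := by
    funext y
    have := part2 n y
    linarith
  rw [hfeq, part1]
  exact Finset.sum_congr rfl fun y _ => by rw [hρ]
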